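/- Let n ≥ 1 and k ≥ 1. If T is an n-periodic (k+1)-crossing-free set of edges on ℤ containing two edges of length kn, say [u, u+kn] ∈ T and [v, v+kn] ∈ T, then u ≡ v (mod n). Consequently, every n-periodic k-triangulation on ℤ contains exactly one edge of length kn up to translation by multiples of n. -/

import Mathlib

/- Edges on the universal cover of the half-cylinder, modeled by the integers.
   An edge is an unordered pair of distinct integers, represented as an ordered
   pair `(a, b)` with `a < b` (validity). -/

namespace Multitriangulation

abbrev Edge := ℤ × ℤ

/-- Translate an edge by `t`: `[a,b] + t = [a+t, b+t]`. -/
def shift (e : Edge) (t : ℤ) : Edge := (e.1 + t, e.2 + t)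

/-- Two edges (as unordered pairs of integers) cross:
their endpoints strictly interleave. -/
def Crosses (e f : Edge) : Prop :=
  (min e.1 e.2 < min f.1 f.2 ∧ min f.1 f.2 < max e.1 e.2 ∧ max e.1 e.2 < max f.1 f.2) ∨
  (min f.1 f.2 < min e.1 e.2 ∧ min e.1 e.2 < max f.1 f.2 ∧ max f.1 f.2 < max e.1 e.2)

/-- A finite set of edges is an `l`-crossing if it consists of `l` pairwise
crossing edges. -/
def IsCrossing (l : ℕ) (S : Finset Edge) : Prop :=
  S.card = l ∧ ∀ e ∈ S, ∀ f ∈ S, e ≠ f → Crosses e f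

/-- A set of edges is `l`-crossing-free if no `l` of its edges pairwise cross. -/
def CrossingFree (l : ℕ) (E : Set Edge) : Prop :=
  ¬ ∃ S : Finset Edge, ↑S ⊆ E ∧ IsCrossing l S

/-- A set of edges is `n`-periodic if `e ∈ E ↔ e + n ∈ E`. -/
def Periodic (n : ℕ) (E : Set Edge) : Prop := ∀ e, e ∈ E ↔ shift e (n : ℤ) ∈ E

/-- All members are genuine edges `[a,b]` with `a < b`. -/
def ValidEdges (E : Set Edge) : Prop := ∀ e ∈ E, e.1 < e.2

/-- An `n`-periodic `k`-triangulation on `ℤ`: an `n`-periodic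
`(k+1)`-crossing-free set of edges that is maximal under inclusion among
`n`-periodic `(k+1)`-crossing-free sets of edges. -/
def IsTriangulation (n k : ℕ) (T : Set Edge) : Prop :=
  ValidEdges T ∧ Periodic n T ∧ CrossingFree (k+1) T ∧
  ∀ T', ValidEdges T' → Periodic n T' → CrossingFree (k+1) T' → T ⊆ T' → T' = T

lemma crosses_iff' {e f : Edge} (he : e.1 < e.2) (hf : f.1 < f.2) :
    Crosses e f ↔ (e.1 < f.1 ∧ f.1 < e.2 ∧ e.2 < f.2) ∨ (f.1 < e.1 ∧ e.1 < f.2 ∧ f.2 < e.2) := by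
  unfold Crosses
  rw [min_eq_left he.le, max_eq_right he.le, min_eq_left hf.le, max_eq_right hf.le]

lemma crosses_symm {e f : Edge} (h : Crosses e f) : Crosses f e := by
  unfold Crosses at *; tauto

lemma not_crosses_of_unit {e f : Edge} (h : e.2 = e.1 + 1) : ¬ Crosses e f := by
  unfold Crosses; omega

lemma pair_eq {a b c d : ℤ} (h1 : a = c) (h2 : b = d) : ((a, b) : Edge) = (c, d) := by
  rw [h1, h2]

lemma mem_of_shift_mul {n : ℕ} {T : Set Edge} (hper : Periodic n T) {e : Edge} (he : e ∈ T) :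
    ∀ c : ℤ, shift e (c * n) ∈ T := by
  intro c
  induction c using Int.induction_on with
  | zero => simpa [shift] using he
  | succ i ih =>
      have h2 := (hper _).mp ih
      have heq : shift (shift e ((i : ℤ) * n)) n = shift e (((i : ℤ) + 1) * n) := by
        simp only [shift, Prod.mk.injEq]; constructor <;> ring
      rwa [heq] at h2
  | pred i ih =>
      have heq : shift (shift e ((-(i : ℤ) - 1) * n)) n = shift e ((-(i : ℤ)) * n) := by
        simp only [shift, Prod.mk.injEq]; constructor <;> ring
      exact (hper _).mpr (by rwa [heq])

lemma periodic_orbit (n : ℕ) (e : Edge) :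
    Periodic n {f | ∃ t : ℤ, f = shift e (t * n)} := by
  intro f
  constructor
  · rintro ⟨t, rfl⟩
    exact ⟨t + 1, by simp only [shift, Prod.mk.injEq]; constructor <;> ring⟩
  · rintro ⟨t, ht⟩
    refine ⟨t - 1, ?_⟩
    have h1 : f.1 + (n : ℤ) = e.1 + t * n := congrArg Prod.fst ht
    have h2 : f.2 + (n : ℤ) = e.2 + t * n := congrArg Prod.snd ht
    have hf : f = (f.1, f.2) := rfl
    rw [hf]
    simp only [shift, Prod.mk.injEq]
    exact ⟨by linear_combination h1, by linear_combination h2⟩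

lemma length_kn_residue (n k : ℕ) (hn : 1 ≤ n) (hk : 1 ≤ k) (T : Set Edge)
    (hper : Periodic n T) (hcf : CrossingFree (k+1) T)
    (u v : ℤ) (hu : (u, u + (k : ℤ) * n) ∈ T) (hv : (v, v + (k : ℤ) * n) ∈ T) :
    (n : ℤ) ∣ (u - v) := by
  classical
  by_contra hnd
  set N : ℤ := (k : ℤ) * n with hNdef
  have hn' : (1 : ℤ) ≤ (n : ℤ) := by exact_mod_cast hn
  have hnN : (n : ℤ) ≤ N := le_mul_of_one_le_left (by omega) (by exact_mod_cast hk)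
  have hN0 : 0 < N := by omega
  set r : ℤ := (v - u) % n with hr
  have hr0 : 0 ≤ r := Int.emod_nonneg _ (by omega)
  have hrn : r < n := Int.emod_lt_of_pos _ (by omega)
  have hrne : r ≠ 0 := by
    intro h0
    have hdv : (n : ℤ) ∣ (v - u) := Int.dvd_of_emod_eq_zero (by rw [← hr]; exact h0)
    have : (n : ℤ) ∣ (u - v) := by
      have := dvd_neg.mpr hdv
      rwa [neg_sub] at this
    exact hnd this
  obtain ⟨q, hq⟩ : ∃ q : ℤ, v - u = n * q + r :=
    ⟨(v - u) / n, by rw [hr]; exact (Int.mul_ediv_add_emod _ _).symm⟩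
  have hw : (u + r, u + r + N) ∈ T := by
    have h2 := mem_of_shift_mul hper hv (-q)
    have heq : shift (v, v + N) (-q * n) = (u + r, u + r + N) := by
      simp only [shift, Prod.mk.injEq]
      exact ⟨by linear_combination hq, by linear_combination hq⟩
    rwa [heq] at h2
  have hei : ∀ i : ℕ, i < k → ((u + (i : ℤ) * n, u + (i : ℤ) * n + N) ∈ T ∧ (i : ℤ) * n < N) := by
    intro i hik
    constructor
    · have h2 := mem_of_shift_mul hper hu (i : ℤ)
      have heq : shift (u, u + N) ((i : ℤ) * n) = (u + (i : ℤ) * n, u + (i : ℤ) * n + N) :=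
        pair_eq rfl (by ring)
      rwa [heq] at h2
    · have hik' : (i : ℤ) < k := by exact_mod_cast hik
      calc (i : ℤ) * n < (k : ℤ) * n := by
            exact mul_lt_mul_of_pos_right hik' (by omega)
        _ = N := hNdef.symm
  -- the offsets
  set O : Finset ℤ := insert r ((Finset.range k).image (fun i : ℕ => (i : ℤ) * n)) with hO
  have hOmem : ∀ o ∈ O, 0 ≤ o ∧ o < N ∧ (u + o, u + o + N) ∈ T := by
    intro o ho
    rw [hO, Finset.mem_insert, Finset.mem_image] at ho
    rcases ho with rfl | ⟨i, hi, rfl⟩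
    · exact ⟨hr0, by omega, hw⟩
    · rw [Finset.mem_range] at hi
      have h := hei i hi
      exact ⟨by positivity, h.2, h.1⟩
  have hrnot : r ∉ (Finset.range k).image (fun i : ℕ => (i : ℤ) * n) := by
    simp only [Finset.mem_image, Finset.mem_range]
    rintro ⟨i, hik, hin⟩
    rcases Nat.eq_zero_or_pos i with rfl | hi
    · simp at hin; omega
    · have h1 : (1 : ℤ) ≤ (i : ℤ) := by exact_mod_cast hi
      have : (n : ℤ) ≤ (i : ℤ) * n := le_mul_of_one_le_left (by omega) h1
      linarith
  have hinj : Set.InjOn (fun i : ℕ => (i : ℤ) * n) (Finset.range k) := by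
    intro i _ j _ hij
    have hn0 : (n : ℤ) ≠ 0 := by omega
    exact_mod_cast mul_right_cancel₀ hn0 hij
  have hOcard : O.card = k + 1 := by
    rw [hO, Finset.card_insert_of_notMem hrnot, Finset.card_image_of_injOn hinj,
      Finset.card_range]
  apply hcf
  refine ⟨O.image (fun o => ((u + o, u + o + N) : Edge)), ?_, ?_, ?_⟩
  · intro e he
    rw [Finset.coe_image] at he
    obtain ⟨o, ho, rfl⟩ := he
    exact (hOmem o ho).2.2
  · rw [Finset.card_image_of_injOn (fun o _ o' _ h => by simpa using congrArg Prod.fst h), hOcard]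
  · intro e he f hf hef
    rw [Finset.mem_image] at he hf
    obtain ⟨o, ho, rfl⟩ := he
    obtain ⟨o', ho', rfl⟩ := hf
    have hoo : o ≠ o' := by rintro rfl; exact hef rfl
    obtain ⟨h1, h2, _⟩ := hOmem o ho
    obtain ⟨h1', h2', _⟩ := hOmem o' ho'
    rw [crosses_iff' (by omega) (by omega)]
    simp only []
    omega

lemma extend_max (n k : ℕ) (hn : 1 ≤ n) (hk : 1 ≤ k) (T : Set Edge)
    (hval : ValidEdges T) (hper : Periodic n T) (hcf : CrossingFree (k+1) T)
    (u L : ℤ) (hL0 : 0 < L) (hfT : (u, u + L) ∈ T)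
    (hmax : ∀ e ∈ T, e.2 - e.1 ≤ L) (hLN : L < (k : ℤ) * n) :
    CrossingFree (k+1) (T ∪ {f | ∃ t : ℤ, f = shift (u, u + (k : ℤ) * n) (t * n)}) := by
  classical
  set N : ℤ := (k : ℤ) * n with hNdef
  have hn' : (1 : ℤ) ≤ (n : ℤ) := by exact_mod_cast hn
  have hnN : (n : ℤ) ≤ N := le_mul_of_one_le_left (by omega) (by exact_mod_cast hk)
  have hN0 : 0 < N := by omega
  rintro ⟨S, hST, hcard, hpair⟩
  set Sg := S.filter (fun e => e.2 - e.1 = N) with hSgdef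
  set So := S.filter (fun e => ¬ e.2 - e.1 = N) with hSodef
  have hSoS : ∀ e ∈ So, e ∈ S := fun e he => (Finset.mem_filter.mp he).1
  have hSgS : ∀ e ∈ Sg, e ∈ S := fun e he => (Finset.mem_filter.mp he).1
  have hOT : ∀ e ∈ So, e ∈ T := by
    intro e he
    have h2 := (Finset.mem_filter.mp he).2
    rcases hST (hSoS e he) with h | ⟨t, rfl⟩
    · exact h
    · exact absurd (by simp only [shift]; ring) h2
  have hOv : ∀ e ∈ So, e.1 < e.2 ∧ e.2 - e.1 ≤ L :=
    fun e he => ⟨hval e (hOT e he), hmax e (hOT e he)⟩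
  have hGform : ∀ e ∈ Sg, ∃ t : ℤ, e = (u + t * n, u + t * n + N) := by
    intro e he
    obtain ⟨heS, hlen⟩ := Finset.mem_filter.mp he
    rcases hST heS with h | ⟨t, rfl⟩
    · exact absurd hlen (by have := hmax e h; omega)
    · exact ⟨t, pair_eq rfl (by simp only [shift]; ring)⟩
  have hcards : Sg.card + So.card = k + 1 := by
    rw [hSgdef, hSodef, Finset.card_filter_add_card_filter_not, hcard]
  -- left endpoints of the long edges
  set X := Sg.image (fun e => e.1) with hXdef
  have hXmem : ∀ x ∈ X, (x, x + N) ∈ S := by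
    intro x hx
    rw [hXdef, Finset.mem_image] at hx
    obtain ⟨e, he, rfl⟩ := hx
    obtain ⟨t, rfl⟩ := hGform e he
    exact hSgS _ he
  have hXt : ∀ x ∈ X, ∃ t : ℤ, x = u + t * n := by
    intro x hx
    rw [hXdef, Finset.mem_image] at hx
    obtain ⟨e, he, rfl⟩ := hx
    obtain ⟨t, rfl⟩ := hGform e he
    exact ⟨t, rfl⟩
  have hXcard : X.card = Sg.card := by
    rw [hXdef]
    apply Finset.card_image_of_injOn
    intro e he e' he' h
    obtain ⟨t, rfl⟩ := hGform e he
    obtain ⟨t', rfl⟩ := hGform e' he'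
    simp only at h
    rw [h]
  have hXdiff : ∀ x ∈ X, ∀ y ∈ X, x ≠ y → x - y < N ∧ y - x < N := by
    intro x hx y hy hxy
    have hcr := hpair _ (hXmem x hx) _ (hXmem y hy) (by
      intro h; exact hxy (by simpa using congrArg Prod.fst h))
    rw [crosses_iff' (by simp; omega) (by simp; omega)] at hcr
    simp only at hcr
    omega
  -- case: no old edges
  by_cases hSoE : So = ∅
  · have hXc : X.card = k + 1 := by
      rw [hXcard]
      have : So.card = 0 := by rw [hSoE]; simp
      omega
    have hXne : X.Nonempty := by
      rw [← Finset.card_pos, hXc]; omega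
    set Y := X.image (fun x => (x - u) / n) with hYdef
    have hxrec : ∀ x ∈ X, x = u + ((x - u) / n) * n := by
      intro x hx
      obtain ⟨t, rfl⟩ := hXt x hx
      have : (u + t * n - u) = t * n := by ring
      rw [this, Int.mul_ediv_cancel _ (by omega)]
    have hYcard : Y.card = k + 1 := by
      rw [hYdef, Finset.card_image_of_injOn, hXc]
      intro x hx y hy h
      have h1 := hxrec x hx
      have h2 := hxrec y hy
      simp only at h
      rw [h1, h2, h]
    have hYbd : ∀ p ∈ Y, ∀ q ∈ Y, p - q ≤ (k : ℤ) - 1 := by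
      intro p hp q hq
      rw [hYdef, Finset.mem_image] at hp hq
      obtain ⟨x, hx, rfl⟩ := hp
      obtain ⟨y, hy, rfl⟩ := hq
      by_cases hxy : x = y
      · subst hxy; omega
      · have hd := (hXdiff x hx y hy hxy).1
        have hxx := hxrec x hx
        have hyy := hxrec y hy
        by_contra hgt
        push_neg at hgt
        have hkle : (k : ℤ) ≤ (x - u) / n - (y - u) / n := by omega
        have : (k : ℤ) * n ≤ ((x - u) / n - (y - u) / n) * n :=
          mul_le_mul_of_nonneg_right hkle (by omega)
        have hxy' : x - y = ((x - u) / n - (y - u) / n) * n := by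
          nlinarith [hxx, hyy]
        omega
    obtain ⟨ym, hymY, hymin⟩ := Y.exists_min_image id (by
      rw [← Finset.card_pos, hYcard]; omega)
    have hsub : Y ⊆ Finset.Icc ym (ym + ((k : ℤ) - 1)) := by
      intro q hq
      rw [Finset.mem_Icc]
      exact ⟨hymin q hq, by have := hYbd q hq ym hymY; omega⟩
    have hle := Finset.card_le_card hsub
    rw [hYcard, Int.card_Icc] at hle
    have : ((ym + ((k : ℤ) - 1) + 1 - ym).toNat : ℤ) = (k : ℤ) := by
      rw [Int.toNat_of_nonneg (by omega)]; ring
    omega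
  -- main case: there are old edges
  have hSone : So.Nonempty := Finset.nonempty_iff_ne_empty.mpr hSoE
  have hXne : X.Nonempty := by
    rw [← Finset.card_pos, hXcard]
    rcases Finset.eq_empty_or_nonempty Sg with h | h
    · exfalso
      apply hcf
      refine ⟨S, ?_, hcard, hpair⟩
      intro e he
      rw [Finset.mem_coe] at he
      apply hOT
      rw [hSodef, Finset.mem_filter]
      refine ⟨he, ?_⟩
      intro hlen
      have : e ∈ Sg := by rw [hSgdef, Finset.mem_filter]; exact ⟨he, hlen⟩
      rw [h] at this; simp at this
    · exact Finset.card_pos.mpr h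
  -- A/B classification
  have hABfull : ∀ f ∈ So, ∀ x ∈ X, (f.1 < x ∧ x < f.2) ∨ (f.1 < x + N ∧ x + N < f.2) := by
    intro f hf x hx
    obtain ⟨hfv, hfl⟩ := hOv f hf
    have hne : f ≠ (x, x + N) := by
      intro h
      have h2 := (Finset.mem_filter.mp hf).2
      rw [h] at h2
      simp at h2
    have hcr := hpair f (hSoS f hf) _ (hXmem x hx) hne
    rw [crosses_iff' hfv (by simp; omega)] at hcr
    simp only at hcr
    rcases hcr with h | h
    · exact Or.inl ⟨h.1, h.2.1⟩
    · exact Or.inr ⟨h.2.1, h.2.2⟩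
  set kept : ℤ → Prop := fun x => ∃ f ∈ So, f.1 < x ∧ x < f.2 with hkeptdef
  set rep : ℤ → ℤ := fun x => if kept x then x else x + N with hrepdef
  have hrep_or : ∀ x, rep x = x ∨ rep x = x + N := by
    intro x
    rw [hrepdef]
    by_cases h : kept x
    · left; simp [h]
    · right; simp [h]
  -- the sandwich old edge
  obtain ⟨f₀, hf₀, hf₀in⟩ : ∃ f₀ ∈ So, ∀ x ∈ X, f₀.1 < rep x ∧ rep x < f₀.2 := by
    by_cases hkX : ∃ x ∈ X, kept x
    · obtain ⟨x₀, hx₀X, hx₀k⟩ := hkX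
      set K := X.filter kept with hKdef
      have hKne : K.Nonempty := ⟨x₀, Finset.mem_filter.mpr ⟨hx₀X, hx₀k⟩⟩
      set xm := K.min' hKne with hxmdef
      have hxmK : xm ∈ K := K.min'_mem hKne
      obtain ⟨hxmX, hxmk⟩ := Finset.mem_filter.mp hxmK
      obtain ⟨f₀, hf₀, hA₀⟩ := hxmk
      refine ⟨f₀, hf₀, ?_⟩
      intro x hx
      obtain ⟨hfv, hfl⟩ := hOv f₀ hf₀
      by_cases hkx : kept x
      · have hrx : rep x = x := by rw [hrepdef]; simp [hkx]
        rw [hrx]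
        rcases hABfull f₀ hf₀ x hx with h | h
        · exact h
        · exfalso
          have hxK : x ∈ K := Finset.mem_filter.mpr ⟨hx, hkx⟩
          have hle : xm ≤ x := K.min'_le x hxK
          -- h : B f₀ x, hA₀ : A f₀ xm → x < xm, contradiction
          omega
      · have hrx : rep x = x + N := by rw [hrepdef]; simp [hkx]
        rw [hrx]
        rcases hABfull f₀ hf₀ x hx with h | h
        · exact absurd ⟨f₀, hf₀, h⟩ hkx
        · exact h
    · push_neg at hkX
      obtain ⟨f₀, hf₀⟩ := hSone
      refine ⟨f₀, hf₀, ?_⟩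
      intro x hx
      have hrx : rep x = x + N := by rw [hrepdef]; simp [hkX x hx]
      rw [hrx]
      rcases hABfull f₀ hf₀ x hx with h | h
      · exact absurd ⟨f₀, hf₀, h⟩ (hkX x hx)
      · exact h
  obtain ⟨hf₀v, hf₀l⟩ := hOv f₀ hf₀
  -- replacement edges are in T
  have hrepT : ∀ x ∈ X, ((rep x, rep x + L) : Edge) ∈ T := by
    intro x hx
    obtain ⟨t, ht⟩ := hXt x hx
    rcases hrep_or x with hr | hr
    · have h2 := mem_of_shift_mul hper hfT t
      have heq : shift (u, u + L) (t * n) = ((rep x, rep x + L) : Edge) := by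
        rw [hr, ht]; exact pair_eq rfl (by simp only [shift]; ring)
      rwa [heq] at h2
    · have h2 := mem_of_shift_mul hper hfT (t + k)
      have heq : shift (u, u + L) ((t + k) * n) = ((rep x, rep x + L) : Edge) := by
        rw [hr, ht]
        exact pair_eq (by simp only [shift, hNdef]; ring) (by simp only [shift, hNdef]; ring)
      rwa [heq] at h2
  -- replacement edges cross all old edges
  have hrep_cross : ∀ x ∈ X, ∀ f ∈ So, Crosses ((rep x, rep x + L) : Edge) f := by
    intro x hx f hf
    obtain ⟨hfv, hfl⟩ := hOv f hf
    rw [crosses_iff' (by simp; omega) hfv]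
    simp only
    by_cases hkx : kept x
    · have hr : rep x = x := by rw [hrepdef]; simp [hkx]
      rcases hABfull f hf x hx with hA | hB
      · right; rw [hr]; exact ⟨hA.1, hA.2, by omega⟩
      · obtain ⟨f', hf', hA'⟩ := hkx
        obtain ⟨hf'v, hf'l⟩ := hOv f' hf'
        have hfne : f ≠ f' := by
          rintro rfl
          omega
        have hcrf := hpair f (hSoS f hf) f' (hSoS f' hf') hfne
        rw [crosses_iff' hfv hf'v] at hcrf
        rcases hcrf with hc | hc
        · exfalso; omega
        · left; rw [hr]
          exact ⟨by omega, by omega, by omega⟩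
    · have hr : rep x = x + N := by rw [hrepdef]; simp [hkx]
      have hB : f.1 < x + N ∧ x + N < f.2 :=
        (hABfull f hf x hx).resolve_left (fun hA => hkx ⟨f, hf, hA⟩)
      right; rw [hr]
      exact ⟨hB.1, hB.2, by omega⟩
  -- replacements distinct
  have hrep_inj : ∀ x ∈ X, ∀ y ∈ X, x ≠ y → rep x ≠ rep y := by
    intro x hx y hy hxy
    have hd := hXdiff x hx y hy hxy
    rcases hrep_or x with h1 | h1 <;> rcases hrep_or y with h2 | h2 <;> rw [h1, h2] <;> omega
  -- assemble the new crossing inside T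
  set R := X.image (fun x => ((rep x, rep x + L) : Edge)) with hRdef
  have hRmem : ∀ e ∈ R, ∃ x ∈ X, e = ((rep x, rep x + L) : Edge) := by
    intro e he
    rw [hRdef, Finset.mem_image] at he
    obtain ⟨x, hx, rfl⟩ := he
    exact ⟨x, hx, rfl⟩
  have hRcard : R.card = X.card := by
    rw [hRdef]
    apply Finset.card_image_of_injOn
    intro x hx y hy h
    by_contra hxy
    exact hrep_inj x hx y hy hxy (by simpa using congrArg Prod.fst h)
  have hdisj : Disjoint So R := by
    rw [Finset.disjoint_right]
    intro e heR heSo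
    obtain ⟨x, hx, rfl⟩ := hRmem e heR
    have hcr := hrep_cross x hx _ heSo
    rw [crosses_iff' (by simp; omega) (by exact (hOv _ heSo).1)] at hcr
    simp only at hcr
    rcases hrep_or x with h | h <;> omega
  apply hcf
  refine ⟨So ∪ R, ?_, ?_, ?_⟩
  · intro e he
    rw [Finset.coe_union, Set.mem_union] at he
    rcases he with he | he
    · exact hOT e he
    · obtain ⟨x, hx, rfl⟩ := hRmem e he
      exact hrepT x hx
  · rw [Finset.card_union_of_disjoint hdisj, hRcard, hXcard]
    omega
  · intro e he f hf hef
    rw [Finset.mem_union] at he hf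
    rcases he with he | he <;> rcases hf with hf | hf
    · exact hpair e (hSoS e he) f (hSoS f hf) hef
    · obtain ⟨x, hx, rfl⟩ := hRmem f hf
      exact crosses_symm (hrep_cross x hx e he)
    · obtain ⟨x, hx, rfl⟩ := hRmem e he
      exact hrep_cross x hx f hf
    · obtain ⟨x, hx, rfl⟩ := hRmem e he
      obtain ⟨y, hy, rfl⟩ := hRmem f hf
      have hne : rep x ≠ rep y := fun h => hef (pair_eq h (by rw [h]))
      have hx0 := hf₀in x hx
      have hy0 := hf₀in y hy
      rw [crosses_iff' (by simp; omega) (by simp; omega)]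
      simp only
      omega

lemma len_le (n k : ℕ) (hn : 1 ≤ n) (hk : 1 ≤ k) (T : Set Edge)
    (hval : ValidEdges T) (hper : Periodic n T) (hcf : CrossingFree (k+1) T) :
    ∀ e ∈ T, e.2 - e.1 ≤ (k : ℤ) * n := by
  intro e heT
  by_contra hgt
  push_neg at hgt
  have hn' : (1 : ℤ) ≤ (n : ℤ) := by exact_mod_cast hn
  have hev := hval e heT
  apply hcf
  refine ⟨(Finset.range (k+1)).image (fun i : ℕ => ((e.1 + (i : ℤ) * n, e.2 + (i : ℤ) * n) : Edge)), ?_, ?_, ?_⟩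
  · intro f hf
    rw [Finset.coe_image] at hf
    obtain ⟨i, _, rfl⟩ := hf
    exact mem_of_shift_mul hper heT (i : ℤ)
  · rw [Finset.card_image_of_injOn, Finset.card_range]
    intro i hi j hj h
    simp only [Prod.mk.injEq] at h
    have : (i : ℤ) * n = (j : ℤ) * n := by omega
    have hn0 : (n : ℤ) ≠ 0 := by omega
    exact_mod_cast mul_right_cancel₀ hn0 this
  · intro a ha b hb hab
    rw [Finset.mem_image] at ha hb
    obtain ⟨i, hi, rfl⟩ := ha
    obtain ⟨j, hj, rfl⟩ := hb
    rw [Finset.mem_range] at hi hj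
    have hij : i ≠ j := by
      rintro rfl; exact hab rfl
    have hik : (i : ℤ) ≤ k := by omega
    have hjk : (j : ℤ) ≤ k := by exact_mod_cast Nat.lt_succ_iff.mp hj
    have hik' : (i : ℤ) ≤ k := by exact_mod_cast Nat.lt_succ_iff.mp hi
    rw [crosses_iff' (by simp; omega) (by simp; omega)]
    simp only
    rcases lt_trichotomy i j with h | h | h
    · have h1 : (i : ℤ) * n < (j : ℤ) * n :=
        mul_lt_mul_of_pos_right (by exact_mod_cast h) (by omega)
      have h2 : (j : ℤ) * n - (i : ℤ) * n ≤ (k : ℤ) * n := by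
        have : (j : ℤ) - i ≤ k := by omega
        nlinarith
      left; refine ⟨by omega, by omega, by omega⟩
    · exact absurd h hij
    · have h1 : (j : ℤ) * n < (i : ℤ) * n :=
        mul_lt_mul_of_pos_right (by exact_mod_cast h) (by omega)
      have h2 : (i : ℤ) * n - (j : ℤ) * n ≤ (k : ℤ) * n := by
        have : (i : ℤ) - j ≤ k := by omega
        nlinarith
      right; refine ⟨by omega, by omega, by omega⟩

lemma exists_length_kn (n k : ℕ) (hn : 1 ≤ n) (hk : 1 ≤ k) (T : Set Edge)
    (hT : IsTriangulation n k T) : ∃ u : ℤ, (u, u + (k : ℤ) * n) ∈ T := by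
  classical
  obtain ⟨hval, hper, hcf, hmaxT⟩ := hT
  have hn' : (1 : ℤ) ≤ (n : ℤ) := by exact_mod_cast hn
  have hk' : (1 : ℤ) ≤ (k : ℤ) := by exact_mod_cast hk
  have hkn1 : (1 : ℤ) ≤ (k : ℤ) * n := by nlinarith
  -- unit edge is in T
  have hunit : ((0 : ℤ), (1 : ℤ)) ∈ T := by
    set U : Set Edge := {f | ∃ t : ℤ, f = shift (0, 1) (t * n)} with hU
    have hval' : ValidEdges (T ∪ U) := by
      rintro e (he | ⟨t, rfl⟩)
      · exact hval e he
      · simp only [shift]; omega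
    have hper' : Periodic n (T ∪ U) := by
      intro e
      constructor
      · rintro (he | he)
        · exact Or.inl ((hper e).mp he)
        · exact Or.inr ((periodic_orbit n (0,1) e).mp he)
      · rintro (he | he)
        · exact Or.inl ((hper e).mpr he)
        · exact Or.inr ((periodic_orbit n (0,1) e).mpr he)
    have hcf' : CrossingFree (k+1) (T ∪ U) := by
      rintro ⟨S, hST, hcard, hpair⟩
      by_cases hall : ∀ e ∈ S, e ∈ T
      · exact hcf ⟨S, hall, hcard, hpair⟩
      · push_neg at hall
        obtain ⟨e, heS, heT⟩ := hall
        rcases hST heS with h | ⟨t, rfl⟩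
        · exact heT h
        · have hc : 1 < S.card := by rw [hcard]; omega
          obtain ⟨f, hfS, hfe⟩ := Finset.exists_mem_ne hc _
          have := hpair _ heS f hfS (Ne.symm hfe)
          exact not_crosses_of_unit (by simp [shift]; ring) this
    have heq := hmaxT _ hval' hper' hcf' Set.subset_union_left
    have h0 : ((0:ℤ), (1:ℤ)) ∈ T ∪ U := Or.inr ⟨0, by simp [shift]⟩
    rwa [heq] at h0
  have hlen := len_le n k hn hk T hval hper hcf
  -- greatest length
  obtain ⟨L, ⟨⟨e₀, he₀T, he₀L⟩, hLub⟩⟩ :=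
    Int.exists_greatest_of_bdd (P := fun z => ∃ e, e ∈ T ∧ e.2 - e.1 = z)
      ⟨(k : ℤ) * n, fun z ⟨e, he, hz⟩ => hz ▸ hlen e he⟩
      ⟨1, ((0:ℤ), (1:ℤ)), hunit, by norm_num⟩
  have hL1 : 1 ≤ L := hLub 1 ⟨((0:ℤ), (1:ℤ)), hunit, by norm_num⟩
  have hLkn : L ≤ (k : ℤ) * n := by have := hlen e₀ he₀T; omega
  have he₀eq : e₀ = (e₀.1, e₀.1 + L) := by
    have : e₀ = (e₀.1, e₀.2) := rfl
    rw [this]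
    exact pair_eq rfl (by omega)
  rcases eq_or_lt_of_le hLkn with hcase | hcase
  · exact ⟨e₀.1, by rw [← hcase, ← he₀eq]; exact he₀T⟩
  · -- extend by an edge of length kn
    have hfT : (e₀.1, e₀.1 + L) ∈ T := he₀eq ▸ he₀T
    have hmaxL : ∀ e ∈ T, e.2 - e.1 ≤ L := fun e he => hLub _ ⟨e, he, rfl⟩
    have hcfU := extend_max n k hn hk T hval hper hcf e₀.1 L (by omega) hfT hmaxL hcase
    set G : Set Edge := {f | ∃ t : ℤ, f = shift (e₀.1, e₀.1 + (k : ℤ) * n) (t * n)} with hG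
    have hval' : ValidEdges (T ∪ G) := by
      rintro e (he | ⟨t, rfl⟩)
      · exact hval e he
      · simp only [shift]; omega
    have hper' : Periodic n (T ∪ G) := by
      intro e
      constructor
      · rintro (he | he)
        · exact Or.inl ((hper e).mp he)
        · exact Or.inr ((periodic_orbit n _ e).mp he)
      · rintro (he | he)
        · exact Or.inl ((hper e).mpr he)
        · exact Or.inr ((periodic_orbit n _ e).mpr he)
    have heq := hmaxT _ hval' hper' hcfU Set.subset_union_left
    have h0 : ((e₀.1 : ℤ), e₀.1 + (k : ℤ) * n) ∈ T ∪ G :=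
      Or.inr ⟨0, by simp [shift]⟩
    rw [heq] at h0
    exact ⟨e₀.1, h0⟩


/-- If an `n`-periodic `(k+1)`-crossing-free set of edges contains
two edges `[u, u+kn]` and `[v, v+kn]` of length `kn`, then `u ≡ v (mod n)`.
Consequently every `n`-periodic `k`-triangulation contains exactly one edge of
length `kn` up to translation by multiples of `n`. -/
theorem edge_of_length_kn_unique (n k : ℕ) (hn : 1 ≤ n) (hk : 1 ≤ k) :
    (∀ T : Set Edge, ValidEdges T → Periodic n T → CrossingFree (k+1) T →
      ∀ u v : ℤ, (u, u + (k : ℤ) * n) ∈ T → (v, v + (k : ℤ) * n) ∈ T →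
        (n : ℤ) ∣ (u - v)) ∧
    (∀ T : Set Edge, IsTriangulation n k T →
      ∃ u : ℤ, (u, u + (k : ℤ) * n) ∈ T ∧
        ∀ v : ℤ, (v, v + (k : ℤ) * n) ∈ T → (n : ℤ) ∣ (v - u)) := by
  constructor
  · intro T hval hper hcf u v hu hv
    exact length_kn_residue n k hn hk T hper hcf u v hu hv
  · intro T hT
    obtain ⟨u, hu⟩ := exists_length_kn n k hn hk T hT
    obtain ⟨hval, hper, hcf, _⟩ := hT
    exact ⟨u, hu, fun v hv => length_kn_residue n k hn hk T hper hcf v u hv hu⟩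



end Multitriangulation
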